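/- Let q be an odd prime power, c a non-square element of GF(q), and define the 2q × 2q block matrix D = [[A₁, A₂],[A₃, A₄]] over the additive group of GF(q), where A₁[x,y] = xy + x²/4, A₂[x,y] = xy + c x²/4, A₃[x,y] = xy − y² − x²/4, A₄[x,y] = (xy − y² − x²/4)/c, for x,y ranging over GF(q). Then for every pair of distinct rows of D, the entrywise difference contains each element of GF(q) exactly twice; i.e., D is a generalized Hadamard matrix GH(q,2) over the additive group of GF(q). -/

import Mathlib

open Finset

section JGHAux

variable {F : Type*} [Field F] [Fintype F] [DecidableEq F]

omit [Field F] [DecidableEq F] in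
lemma jgh_split (p : Bool × F → Prop) [DecidablePred p] :
    (univ.filter p).card
      = (univ.filter fun y : F => p (false, y)).card
        + (univ.filter fun y : F => p (true, y)).card := by
  simp only [Finset.card_filter]
  rw [Fintype.sum_prod_type, Fintype.sum_bool, add_comm]

lemma jgh_linear (m b a : F) (hm : m ≠ 0) :
    (univ.filter fun y : F => m * y + b = a).card = 1 := by
  rw [Finset.card_eq_one]
  refine ⟨(a - b) / m, ?_⟩
  ext y
  simp only [mem_filter, mem_univ, true_and, mem_singleton, eq_div_iff hm]
  constructor <;> intro h <;> linear_combination h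

lemma jgh_shift (s t : F) :
    (univ.filter fun y : F => (y + s) ^ 2 = t).card
      = (univ.filter fun u : F => u ^ 2 = t).card := by
  apply Finset.card_nbij' (fun y => y + s) (fun u => u - s) <;> simp_all [mem_filter, Set.MapsTo, Set.LeftInvOn, Set.RightInvOn, Set.EqOn]

lemma jgh_sqcount {c : F} (hc : ¬ IsSquare c) (hF : ringChar F ≠ 2) (t : F) :
    (univ.filter fun u : F => u ^ 2 = t).card
      + (univ.filter fun u : F => u ^ 2 = c * t).card = 2 := by
  have h1 := quadraticChar_card_sqrts hF t
  have h2 := quadraticChar_card_sqrts hF (c * t)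
  have hmul : quadraticChar F (c * t) = quadraticChar F c * quadraticChar F t :=
    map_mul _ _ _
  have hcneg : quadraticChar F c = -1 := quadraticChar_neg_one_iff_not_isSquare.mpr hc
  have hset : ∀ u : F, ({x : F | x ^ 2 = u}.toFinset) = univ.filter fun x : F => x ^ 2 = u := by
    intro u; ext x; simp
  rw [hset] at h1 h2
  have : ((univ.filter fun u : F => u ^ 2 = t).card : ℤ)
      + ((univ.filter fun u : F => u ^ 2 = c * t).card : ℤ) = 2 := by
    rw [h1, h2, hmul, hcneg]; ring
  exact_mod_cast this

lemma jgh_quad {c : F} (hc : ¬ IsSquare c) (hF : ringChar F ≠ 2)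
    (p q : F → Prop) [DecidablePred p] [DecidablePred q] (s1 s2 t : F)
    (hp : ∀ y, p y ↔ (y + s1) ^ 2 = t) (hq : ∀ y, q y ↔ (y + s2) ^ 2 = c * t) :
    (univ.filter p).card + (univ.filter q).card = 2 := by
  rw [filter_congr (fun y _ => hp y), filter_congr (fun y _ => hq y),
    jgh_shift, jgh_shift]
  exact jgh_sqcount hc hF t

end JGHAux

/-- Jungnickel's construction: for a finite field `F` of odd order `q` and a
non-square `c ∈ F`, the `2q × 2q` block matrix `D = [[A₁,A₂],[A₃,A₄]]` with
`A₁[x,y] = xy + x²/4`, `A₂[x,y] = xy + cx²/4`, `A₃[x,y] = xy − y² − x²/4`,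
`A₄[x,y] = (xy − y² − x²/4)/c` is a generalized Hadamard matrix `GH(q,2)` over
the additive group of `F`: in the entrywise difference of any two distinct rows,
every element of `F` appears exactly twice. -/
theorem jungnickel_genHadamard (F : Type*) [Field F] [Fintype F] [DecidableEq F]
    (hodd : Odd (Fintype.card F))
    (c : F) (hc : ¬ ∃ b : F, b ^ 2 = c)
    (D : Bool × F → Bool × F → F)
    (hD1 : ∀ x y : F, D (false, x) (false, y) = x * y + x ^ 2 / 4)
    (hD2 : ∀ x y : F, D (false, x) (true, y) = x * y + c * x ^ 2 / 4)
    (hD3 : ∀ x y : F, D (true, x) (false, y) = x * y - y ^ 2 - x ^ 2 / 4)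
    (hD4 : ∀ x y : F, D (true, x) (true, y) = (x * y - y ^ 2 - x ^ 2 / 4) / c) :
    ∀ r s : Bool × F, r ≠ s → ∀ a : F,
      (Finset.univ.filter (fun col : Bool × F => D r col - D s col = a)).card = 2 := by
  have hF2 : ringChar F ≠ 2 := by
    intro h
    have := FiniteField.even_card_iff_char_two.mp h
    have := Nat.odd_iff.mp hodd
    omega
  have h2 : (2 : F) ≠ 0 := Ring.two_ne_zero hF2
  have h4 : (4 : F) ≠ 0 := by
    have : (4 : F) = 2 * 2 := by norm_num
    rw [this]; exact mul_ne_zero h2 h2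
  have hc0 : c ≠ 0 := fun h => hc ⟨0, by simp [h]⟩
  have hcs : ¬ IsSquare c := by
    rintro ⟨b, hb⟩
    exact hc ⟨b, by rw [sq]; exact hb.symm⟩
  rintro ⟨b1, x1⟩ ⟨b2, x2⟩ hne a
  rw [jgh_split]
  cases b1 <;> cases b2
  · -- false, false
    have hx : x1 ≠ x2 := by simpa using hne
    have hm : x1 - x2 ≠ 0 := sub_ne_zero.mpr hx
    simp only [hD1, hD2]
    have e1 : ∀ y : F, (x1 * y + x1 ^ 2 / 4 - (x2 * y + x2 ^ 2 / 4) = a)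
        ↔ ((x1 - x2) * y + (x1 ^ 2 / 4 - x2 ^ 2 / 4) = a) := fun y => by
      constructor <;> intro h <;> linear_combination h
    have e2 : ∀ y : F, (x1 * y + c * x1 ^ 2 / 4 - (x2 * y + c * x2 ^ 2 / 4) = a)
        ↔ ((x1 - x2) * y + (c * x1 ^ 2 / 4 - c * x2 ^ 2 / 4) = a) := fun y => by
      constructor <;> intro h <;> linear_combination h
    rw [filter_congr (fun y _ => e1 y), filter_congr (fun y _ => e2 y),
      jgh_linear _ _ _ hm, jgh_linear _ _ _ hm]
  · -- false, true : quadratic case with t = a - x1*x2/2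
    simp only [hD1, hD2, hD3, hD4]
    refine jgh_quad hcs hF2 _ _ ((x1 - x2) / 2) ((c * x1 - x2) / 2) (a - x1 * x2 / 2)
      (fun y => ?_) (fun y => ?_)
    · have key : x1 * y + x1 ^ 2 / 4 - (x2 * y - y ^ 2 - x2 ^ 2 / 4)
          = ((y + (x1 - x2) / 2) ^ 2 - (a - x1 * x2 / 2)) + a := by
        field_simp [h2, h4]
        ring
      rw [key, add_eq_right, sub_eq_zero]
    · have key : x1 * y + c * x1 ^ 2 / 4 - (x2 * y - y ^ 2 - x2 ^ 2 / 4) / c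
          = ((y + (c * x1 - x2) / 2) ^ 2 - c * (a - x1 * x2 / 2)) / c + a := by
        field_simp [h2, h4, hc0]
        ring
      rw [key, add_eq_right, div_eq_zero_iff, or_iff_left hc0, sub_eq_zero]
  · -- true, false : quadratic case with t = -a - x1*x2/2
    simp only [hD1, hD2, hD3, hD4]
    refine jgh_quad hcs hF2 _ _ ((x2 - x1) / 2) ((c * x2 - x1) / 2) (-a - x1 * x2 / 2)
      (fun y => ?_) (fun y => ?_)
    · have key : x1 * y - y ^ 2 - x1 ^ 2 / 4 - (x2 * y + x2 ^ 2 / 4)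
          = -((y + (x2 - x1) / 2) ^ 2 - (-a - x1 * x2 / 2)) + a := by
        field_simp [h2, h4]
        ring
      rw [key, add_eq_right, neg_eq_zero, sub_eq_zero]
    · have key : (x1 * y - y ^ 2 - x1 ^ 2 / 4) / c - (x2 * y + c * x2 ^ 2 / 4)
          = -(((y + (c * x2 - x1) / 2) ^ 2 - c * (-a - x1 * x2 / 2)) / c) + a := by
        field_simp [h2, h4, hc0]
        ring
      rw [key, add_eq_right, neg_eq_zero, div_eq_zero_iff, or_iff_left hc0, sub_eq_zero]
  · -- true, true
    have hx : x1 ≠ x2 := by simpa using hne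
    have hm : x1 - x2 ≠ 0 := sub_ne_zero.mpr hx
    simp only [hD3, hD4]
    have e1 : ∀ y : F, (x1 * y - y ^ 2 - x1 ^ 2 / 4 - (x2 * y - y ^ 2 - x2 ^ 2 / 4) = a)
        ↔ ((x1 - x2) * y + (x2 ^ 2 / 4 - x1 ^ 2 / 4) = a) := fun y => by
      constructor <;> intro h <;> linear_combination h
    have e2 : ∀ y : F, ((x1 * y - y ^ 2 - x1 ^ 2 / 4) / c - (x2 * y - y ^ 2 - x2 ^ 2 / 4) / c = a)
        ↔ (((x1 - x2) / c) * y + ((x2 ^ 2 / 4 - x1 ^ 2 / 4) / c) = a) := fun y => by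
      constructor <;> intro h <;> linear_combination h
    rw [filter_congr (fun y _ => e1 y), filter_congr (fun y _ => e2 y),
      jgh_linear _ _ _ hm, jgh_linear _ _ _ (div_ne_zero hm hc0)]
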